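/- Let $(A_n)$ be a sequence of events with $P(A_n) \to 0$. If $\sum_{n=1}^\infty P(A_n \cap A_{n+1}^c) < \infty$, then $P(\limsup_n A_n) = 0$. -/

import Mathlib

open MeasureTheory Filter Set

theorem barndorff_nielsen {Ω : Type*} [MeasurableSpace Ω] (μ : Measure Ω)
    [IsProbabilityMeasure μ] (A : ℕ → Set Ω) (hA : ∀ n, MeasurableSet (A n))
    (h0 : Tendsto (fun n => μ (A n)) atTop (nhds 0))
    (h : ∑' n, μ (A n ∩ (A (n + 1))ᶜ) < ⊤) :
    μ (limsup A atTop) = 0 := by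
  -- Borel-Cantelli for the difference sets
  have hB : μ (limsup (fun n => A n ∩ (A (n + 1))ᶜ) atTop) = 0 :=
    measure_limsup_atTop_eq_zero h.ne
  -- liminf has measure zero
  have hL : μ (liminf A atTop) = 0 := by
    have hlim : liminf A atTop = ⋃ n, ⋂ k, ⋂ _ : k ≥ n, A k := by
      rw [liminf_eq_iSup_iInf_of_nat]
      rfl
    rw [hlim]
    refine measure_iUnion_null fun n => ?_
    have hsub : ∀ m ≥ n, μ (⋂ k, ⋂ _ : k ≥ n, A k) ≤ μ (A m) := fun m hm =>
      measure_mono (biInter_subset_of_mem hm)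
    have : μ (⋂ k, ⋂ _ : k ≥ n, A k) ≤ 0 :=
      ge_of_tendsto h0 (eventually_atTop.2 ⟨n, hsub⟩)
    exact le_antisymm this zero_le
  -- inclusion
  have hincl : limsup A atTop ⊆
      limsup (fun n => A n ∩ (A (n + 1))ᶜ) atTop ∪ liminf A atTop := by
    intro ω hω
    rw [mem_limsup_iff_frequently_mem] at hω
    by_cases hB' : ω ∈ limsup (fun n => A n ∩ (A (n + 1))ᶜ) atTop
    · exact Or.inl hB'
    · right
      rw [mem_limsup_iff_frequently_mem, not_frequently] at hB'
      rw [mem_liminf_iff_eventually_mem]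
      rw [eventually_atTop] at hB'
      obtain ⟨N, hN⟩ := hB'
      obtain ⟨k, hkN, hk⟩ := (hω.and_eventually (eventually_ge_atTop N)).exists
      have key : ∀ m, k ≤ m → ω ∈ A m := by
        intro m hm
        induction m, hm using Nat.le_induction with
        | base => exact hkN
        | succ m hm ih =>
          have := hN m (le_trans hk hm)
          simp only [mem_inter_iff, mem_compl_iff, not_and, not_not] at this
          exact this ih
      exact eventually_atTop.2 ⟨k, key⟩
  refine le_antisymm ?_ zero_le
  calc μ (limsup A atTop)
      ≤ μ (limsup (fun n => A n ∩ (A (n + 1))ᶜ) atTop ∪ liminf A atTop) :=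
        measure_mono hincl
    _ ≤ μ (limsup (fun n => A n ∩ (A (n + 1))ᶜ) atTop) + μ (liminf A atTop) :=
        measure_union_le _ _
    _ = 0 := by rw [hB, hL, add_zero]
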